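/- For n = 4, the group Γ_4^4 is isomorphic to the free product (ℤ/2ℤ) ∗ (ℤ/2ℤ) ∗ (ℤ/2ℤ) of three copies of ℤ/2ℤ, with the three free factors generated by (1234), (1324), (1243). -/

import Mathlib

/-- Ordered quadruples of elements of `Fin n`, used to index the generators `(ijkl)`. -/
abbrev Quad (n : ℕ) : Type := Fin n × Fin n × Fin n × Fin n

/-- The underlying set `{i, j, k, l}` of a quadruple `(i, j, k, l)`. -/
def qFinset {n : ℕ} (q : Quad n) : Finset (Fin n) := {q.1, q.2.1, q.2.2.1, q.2.2.2}

/-- The four entries of the quadruple are pairwise distinct. -/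
def qDistinct {n : ℕ} (q : Quad n) : Prop := (qFinset q).card = 4

/-- The defining relators of the group `Γ_n^4` of Kim–Manturov:
generators indexed by quadruples of distinct elements (non-distinct quadruples are killed),
involutive relations (1), commutativity relations (2), pentagon relations (3) and dihedral
relations (4). -/
def gammaRels (n : ℕ) : Set (FreeGroup (Quad n)) :=
  {w | ∃ q : Quad n, ¬ qDistinct q ∧ w = FreeGroup.of q} ∪
  {w | ∃ q : Quad n, qDistinct q ∧ w = FreeGroup.of q * FreeGroup.of q} ∪
  {w | ∃ q r : Quad n, qDistinct q ∧ qDistinct r ∧ (qFinset q ∩ qFinset r).card ≤ 2 ∧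
      w = FreeGroup.of q * FreeGroup.of r * (FreeGroup.of q)⁻¹ * (FreeGroup.of r)⁻¹} ∪
  {w | ∃ i j k l m : Fin n, ({i, j, k, l, m} : Finset (Fin n)).card = 5 ∧
      w = FreeGroup.of (i, j, k, l) * FreeGroup.of (i, j, l, m) * FreeGroup.of (j, k, l, m) *
        FreeGroup.of (i, j, k, m) * FreeGroup.of (i, k, l, m)} ∪
  {w | ∃ i j k l : Fin n, qDistinct (i, j, k, l) ∧
      (w = FreeGroup.of (i, j, k, l) * (FreeGroup.of (j, k, l, i))⁻¹ ∨
       w = FreeGroup.of (i, j, k, l) * (FreeGroup.of (l, k, j, i))⁻¹)}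

/-- The group `Γ_n^4` of Kim–Manturov. -/
abbrev Gamma (n : ℕ) : Type := PresentedGroup (gammaRels n)

/-- The generator `(ijkl)` of `Γ_n^4`. -/
def gg {n : ℕ} (q : Quad n) : Gamma n := PresentedGroup.of q

-- auxiliary
instance qDistinct.dec {n : ℕ} (q : Quad n) : Decidable (qDistinct q) :=
  inferInstanceAs (Decidable (_ = 4))

def cls (q : Quad 4) : Fin 3 :=
  if ({q.1, q.2.2.1} : Finset (Fin 4)) = {0, 2} ∨ ({q.1, q.2.2.1} : Finset (Fin 4)) = {1, 3} then 0
  else if ({q.1, q.2.2.1} : Finset (Fin 4)) = {0, 1} ∨ ({q.1, q.2.2.1} : Finset (Fin 4)) = {2, 3} then 1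
  else 2

def rep : Fin 3 → Quad 4 := ![(0,1,2,3), (0,2,1,3), (0,1,3,2)]

lemma cls_cyc : ∀ i j k l : Fin 4, qDistinct (i,j,k,l) →
    qDistinct (j,k,l,i) ∧ qDistinct (l,k,j,i) ∧
    cls (i,j,k,l) = cls (j,k,l,i) ∧ cls (i,j,k,l) = cls (l,k,j,i) := by decide

lemma rep_spec : ∀ i : Fin 3, qDistinct (rep i) ∧ cls (rep i) = i := by decide

abbrev Tgt := Monoid.CoprodI (fun _ : Fin 3 => Multiplicative (ZMod 2))

noncomputable def fgen (q : Quad 4) : Tgt :=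
  if qDistinct q then Monoid.CoprodI.of (i := cls q) (Multiplicative.ofAdd 1) else 1

lemma ofAdd_sq : (Multiplicative.ofAdd (1 : ZMod 2)) * (Multiplicative.ofAdd (1 : ZMod 2)) = 1 := by
  decide

lemma rels_check : ∀ r ∈ gammaRels 4, FreeGroup.lift fgen r = 1 := by
  rintro r (((((⟨q, hq, rfl⟩ | ⟨q, hq, rfl⟩) | ⟨q, s, hq, hs, hcard, rfl⟩) | ⟨i, j, k, l, m, hcard, rfl⟩) | ⟨i, j, k, l, hd, (rfl | rfl)⟩))
  · simp [fgen, hq]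
  · simp only [map_mul, FreeGroup.lift_apply_of, fgen, if_pos hq]
    rw [← MonoidHom.map_mul, ofAdd_sq, map_one]
  · exfalso
    have h4 : qFinset q = Finset.univ := Finset.eq_univ_of_card _ (by simpa [qDistinct] using hq)
    have h4' : qFinset s = Finset.univ := Finset.eq_univ_of_card _ (by simpa [qDistinct] using hs)
    rw [h4, h4'] at hcard
    simp at hcard
  · exfalso
    have := Finset.card_le_univ ({i, j, k, l, m} : Finset (Fin 4))
    rw [hcard] at this
    simp at this

  · obtain ⟨h1, h2, h3, h4⟩ := cls_cyc i j k l hd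
    simp only [map_mul, map_inv, FreeGroup.lift_apply_of, fgen, if_pos hd, if_pos h1, ← h3]
    group
  · obtain ⟨h1, h2, h3, h4⟩ := cls_cyc i j k l hd
    simp only [map_mul, map_inv, FreeGroup.lift_apply_of, fgen, if_pos hd, if_pos h2, ← h4]
    group

noncomputable def phi : Gamma 4 →* Tgt := PresentedGroup.toGroup rels_check

lemma gg_rel {w : FreeGroup (Quad 4)} (h : w ∈ gammaRels 4) :
    PresentedGroup.mk (gammaRels 4) w = 1 :=
  (QuotientGroup.eq_one_iff _).mpr (Subgroup.subset_normalClosure h)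

lemma gg_bad {q : Quad 4} (h : ¬ qDistinct q) : gg q = 1 :=
  gg_rel (Or.inl (Or.inl (Or.inl (Or.inl ⟨q, h, rfl⟩))))

lemma gg_sq {q : Quad 4} (h : qDistinct q) : gg q * gg q = 1 := by
  have := gg_rel (Or.inl (Or.inl (Or.inl (Or.inr ⟨q, h, rfl⟩))))
  rw [map_mul] at this
  exact this

lemma gg_cyc (i j k l : Fin 4) (h : qDistinct (i,j,k,l)) : gg (i,j,k,l) = gg (j,k,l,i) := by
  have := gg_rel (Or.inr ⟨i, j, k, l, h, Or.inl rfl⟩)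
  rw [map_mul, map_inv] at this
  exact mul_inv_eq_one.mp this

lemma gg_rev (i j k l : Fin 4) (h : qDistinct (i,j,k,l)) : gg (i,j,k,l) = gg (l,k,j,i) := by
  have := gg_rel (Or.inr ⟨i, j, k, l, h, Or.inr rfl⟩)
  rw [map_mul, map_inv] at this
  exact mul_inv_eq_one.mp this

lemma norm_gg : ∀ q : Quad 4, qDistinct q → gg q = gg (rep (cls q)) := by
  rintro ⟨i, j, k, l⟩ hq
  fin_cases i <;> fin_cases j <;> fin_cases k <;> fin_cases l <;>
    first
      | exact absurd hq (by decide)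
      | rfl
      | (rw [gg_cyc _ _ _ _ (by decide)]; rfl)
      | (rw [gg_cyc _ _ _ _ (by decide), gg_cyc _ _ _ _ (by decide)]; rfl)
      | (rw [gg_cyc _ _ _ _ (by decide), gg_cyc _ _ _ _ (by decide), gg_cyc _ _ _ _ (by decide)]; rfl)
      | (rw [gg_rev _ _ _ _ (by decide)]; rfl)
      | (rw [gg_cyc _ _ _ _ (by decide), gg_rev _ _ _ _ (by decide)]; rfl)
      | (rw [gg_cyc _ _ _ _ (by decide), gg_cyc _ _ _ _ (by decide), gg_rev _ _ _ _ (by decide)]; rfl)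
      | (rw [gg_cyc _ _ _ _ (by decide), gg_cyc _ _ _ _ (by decide), gg_cyc _ _ _ _ (by decide), gg_rev _ _ _ _ (by decide)]; rfl)

def zhom {G : Type*} [Group G] (g : G) (hg : g * g = 1) : Multiplicative (ZMod 2) →* G where
  toFun x := g ^ (Multiplicative.toAdd x).val
  map_one' := by
    show g ^ (0 : ZMod 2).val = 1
    simp
  map_mul' a b := by
    show g ^ ((Multiplicative.toAdd a) + (Multiplicative.toAdd b)).val = _
    have h2 : g ^ 2 = 1 := by rw [pow_two, hg]
    have key : ∀ k : ℕ, g ^ (k % 2) = g ^ k := by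
      intro k
      conv_rhs => rw [← Nat.div_add_mod k 2]
      rw [pow_add, pow_mul, h2, one_pow, one_mul]
    rw [ZMod.val_add, key, pow_add]

noncomputable def psi : Tgt →* Gamma 4 :=
  Monoid.CoprodI.lift (fun i => zhom (gg (rep i)) (gg_sq (rep_spec i).1))

lemma psi_of (i : Fin 3) :
    psi (Monoid.CoprodI.of (i := i) (Multiplicative.ofAdd 1)) = gg (rep i) := by
  rw [psi, Monoid.CoprodI.lift_of]
  show gg (rep i) ^ (1 : ZMod 2).val = _
  rw [ZMod.val_one, pow_one]

lemma phi_gg (q : Quad 4) : phi (gg q) = fgen q := by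
  show phi (PresentedGroup.of q) = fgen q
  rw [phi, PresentedGroup.toGroup.of]

lemma comp1 : psi.comp phi = MonoidHom.id (Gamma 4) := by
  apply PresentedGroup.ext
  intro q
  show psi (phi (gg q)) = gg q
  rw [phi_gg]
  by_cases hq : qDistinct q
  · rw [fgen, if_pos hq, psi_of]
    exact (norm_gg q hq).symm
  · rw [fgen, if_neg hq, map_one]
    exact (gg_bad hq).symm

lemma comp2 : phi.comp psi = MonoidHom.id Tgt := by
  apply Monoid.CoprodI.ext_hom
  intro i
  ext x
  rcases (by decide : ∀ y : Multiplicative (ZMod 2), y = 1 ∨ y = Multiplicative.ofAdd 1) x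
    with h | h <;> subst h
  · show phi (psi (Monoid.CoprodI.of (i := i) 1)) = Monoid.CoprodI.of (i := i) 1
    simp
  · show phi (psi (Monoid.CoprodI.of (i := i) (Multiplicative.ofAdd 1))) =
      Monoid.CoprodI.of (i := i) (Multiplicative.ofAdd 1)
    rw [psi_of, phi_gg, fgen, if_pos (rep_spec i).1, (rep_spec i).2]

noncomputable def e : Gamma 4 ≃* Tgt := MonoidHom.toMulEquiv phi psi comp1 comp2


/-- For `n = 4`, the group `Γ_4^4` is isomorphic to the free product
`ℤ/2 ∗ ℤ/2 ∗ ℤ/2` of three copies of `ℤ/2ℤ`, the three free factors being generated by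
`(1234)`, `(1324)`, `(1243)` (written with 0-based indices). -/
theorem gamma_four_free_product :
    ∃ e : Gamma 4 ≃* Monoid.CoprodI (fun _ : Fin 3 => Multiplicative (ZMod 2)),
      e (gg ((0 : Fin 4), (1 : Fin 4), (2 : Fin 4), (3 : Fin 4))) =
        Monoid.CoprodI.of (i := (0 : Fin 3)) (Multiplicative.ofAdd (1 : ZMod 2)) ∧
      e (gg ((0 : Fin 4), (2 : Fin 4), (1 : Fin 4), (3 : Fin 4))) =
        Monoid.CoprodI.of (i := (1 : Fin 3)) (Multiplicative.ofAdd (1 : ZMod 2)) ∧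
      e (gg ((0 : Fin 4), (1 : Fin 4), (3 : Fin 4), (2 : Fin 4))) =
        Monoid.CoprodI.of (i := (2 : Fin 3)) (Multiplicative.ofAdd (1 : ZMod 2)) := by
  have he : ∀ q : Quad 4, e (gg q) = phi (gg q) := fun q => rfl
  refine ⟨e, ?_, ?_, ?_⟩ <;>
  · rw [he, phi_gg, fgen, if_pos (by decide)]; rfl
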